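/- arXiv:1310.1656 — 6 statements merged into one kernel-verified Lean document; each statement's English description precedes it below -/
import Mathlib

section
/- Let H be a 3×3 positive semidefinite Hermitian matrix such that 6·det(H) > tr(adj(H)). Then H is positive definite and 6·H − I is positive definite. -/
open ComplexOrder Matrix

lemma my_unitary_conj_posDef {n : Type*} [Fintype n] [DecidableEq n]
    {U : Matrix n n ℂ} (hU : U ∈ Matrix.unitaryGroup n ℂ) {d : n → ℂ}
    (hd : ∀ i, 0 < d i) : (U * Matrix.diagonal d * star U).PosDef := by
  have hdiag : (Matrix.diagonal d).PosDef := Matrix.posDef_diagonal_iff.mpr hd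
  have hU1 : U * Uᴴ = 1 := (Matrix.mem_unitaryGroup_iff).mp hU
  refine Matrix.posDef_iff_dotProduct_mulVec.mpr ⟨?_, ?_⟩
  · rw [Matrix.star_eq_conjTranspose]
    have := Matrix.isHermitian_conjTranspose_mul_mul Uᴴ hdiag.1
    simpa [Matrix.conjTranspose_conjTranspose] using this
  · intro x hx
    have hxne : Uᴴ *ᵥ x ≠ 0 := by
      intro h0
      apply hx
      have : U *ᵥ (Uᴴ *ᵥ x) = 0 := by rw [h0, Matrix.mulVec_zero]
      rwa [Matrix.mulVec_mulVec, hU1, Matrix.one_mulVec] at this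
    have h2 := hdiag.dotProduct_mulVec_pos hxne
    rw [Matrix.star_eq_conjTranspose]
    simpa only [Matrix.star_mulVec, Matrix.dotProduct_mulVec, Matrix.vecMul_vecMul,
      Matrix.conjTranspose_conjTranspose] using h2

/-- If `H` is a 3×3 positive semidefinite Hermitian matrix with
`6·det H > tr (adj H)`, then `H` is positive definite and `6·H − I` is positive definite. -/
theorem stmt_2 (H : Matrix (Fin 3) (Fin 3) ℂ) (hH : H.PosSemidef)
    (h : 6 * H.det.re > H.adjugate.trace.re) :
    H.PosDef ∧ ((6 : ℂ) • H - 1).PosDef := by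
  have hA := hH.1
  set U : Matrix (Fin 3) (Fin 3) ℂ := (hA.eigenvectorUnitary : Matrix (Fin 3) (Fin 3) ℂ) with hUdef
  have hU : U ∈ Matrix.unitaryGroup (Fin 3) ℂ := hA.eigenvectorUnitary.2
  set lam := hA.eigenvalues with hlam
  have spec : H = U * diagonal (RCLike.ofReal ∘ lam) * star U := hA.spectral_theorem
  set a := lam 0; set b := lam 1; set c := lam 2
  have ha : 0 ≤ a := hH.eigenvalues_nonneg 0
  have hb : 0 ≤ b := hH.eigenvalues_nonneg 1
  have hc : 0 ≤ c := hH.eigenvalues_nonneg 2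
  -- determinant
  have hdet : H.det.re = a * b * c := by
    rw [hA.det_eq_prod_eigenvalues, Fin.prod_univ_three]
    norm_cast
  -- trace of adjugate
  have htr : H.adjugate.trace.re = b * c + a * c + a * b := by
    have hUstar : adjugate U * adjugate (star U) = 1 := by
      rw [← adjugate_mul_distrib, (Matrix.mem_unitaryGroup_iff').mp hU, adjugate_one]
    have : H.adjugate.trace = (adjugate (diagonal (RCLike.ofReal ∘ lam))).trace := by
      rw [spec, adjugate_mul_distrib, adjugate_mul_distrib, trace_mul_comm,
        mul_assoc, hUstar, mul_one]
    rw [this, adjugate_diagonal, trace_diagonal, Fin.sum_univ_three]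
    have e0 : (Finset.univ.erase (0 : Fin 3)) = {1, 2} := by decide
    have e1 : (Finset.univ.erase (1 : Fin 3)) = {0, 2} := by decide
    have e2 : (Finset.univ.erase (2 : Fin 3)) = {0, 1} := by decide
    rw [e0, e1, e2, Finset.prod_pair (by decide), Finset.prod_pair (by decide),
      Finset.prod_pair (by decide)]
    simp only [Function.comp_apply]
    norm_cast
  rw [hdet] at h; rw [htr] at h
  have hpa : (1:ℝ)/6 < a := by nlinarith [mul_nonneg hb hc, mul_nonneg ha hb, mul_nonneg ha hc]
  have hpb : (1:ℝ)/6 < b := by nlinarith [mul_nonneg hb hc, mul_nonneg ha hb, mul_nonneg ha hc]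
  have hpc : (1:ℝ)/6 < c := by nlinarith [mul_nonneg hb hc, mul_nonneg ha hb, mul_nonneg ha hc]
  have hposlam : ∀ i, (1:ℝ)/6 < lam i := by
    intro i; fin_cases i <;> assumption
  constructor
  · rw [spec]
    apply my_unitary_conj_posDef hU
    intro i
    simp only [Function.comp_apply]
    exact RCLike.ofReal_pos.mpr (lt_trans (by norm_num) (hposlam i))
  · have key : (6 : ℂ) • H - 1 =
        U * diagonal (fun i => (6 : ℂ) * (lam i : ℂ) - 1) * star U := by
      have hd : diagonal (fun i : Fin 3 => (6 : ℂ) * (lam i : ℂ) - 1)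
          = (6 : ℂ) • diagonal (RCLike.ofReal ∘ lam) - 1 := by
        rw [← diagonal_one, ← diagonal_smul, ← diagonal_sub]
        rfl
      have hU1 : U * star U = 1 := (Matrix.mem_unitaryGroup_iff).mp hU
      rw [hd, mul_sub, sub_mul, mul_one, hU1, mul_smul_comm, smul_mul_assoc, ← spec]
    rw [key]
    apply my_unitary_conj_posDef hU
    intro i
    have h6 : ((6 * lam i - 1 : ℝ) : ℂ) = 6 * (lam i : ℂ) - 1 := by push_cast; ring
    rw [← h6]
    exact Complex.zero_lt_real.mpr (by linarith [hposlam i])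
end

section
/- The function H ↦ tr(H)/det(H) is convex on the set of 3×3 positive definite Hermitian matrices; that is, for all positive definite Hermitian H₁, H₂ and all t ∈ [0,1], tr(tH₁+(1−t)H₂)/det(tH₁+(1−t)H₂) ≤ t·tr(H₁)/det(H₁) + (1−t)·tr(H₂)/det(H₂). -/
open ComplexOrder Matrix


lemma auxA (b c : ℝ) (hb : 0 < b) (hc : 0 < c) :
    0 ≤ 1 + b^2*c + b*c^2 - 3*(b*c) := by
  nlinarith [sq_nonneg (b*c-1), sq_nonneg (b-c), sq_nonneg (b+c-2), mul_pos hb hc,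
    sq_nonneg (b*c-b), sq_nonneg (b*c-c), mul_nonneg (mul_nonneg hb.le hc.le) (sq_nonneg (b-c)),
    mul_nonneg hb.le (sq_nonneg (c-1)), mul_nonneg hc.le (sq_nonneg (b-1))]

lemma auxB (b c : ℝ) (hb : 0 < b) (hc : 0 < c) :
    0 ≤ b + c + b^2*c^2 - 3*(b*c) := by
  nlinarith [sq_nonneg (b*c-1), sq_nonneg (b-c), mul_pos hb hc,
    sq_nonneg (b*c-b), sq_nonneg (b*c-c), mul_nonneg (mul_nonneg hb.le hc.le) (sq_nonneg (b-c)),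
    mul_nonneg hb.le (sq_nonneg (c-1)), mul_nonneg hc.le (sq_nonneg (b-1))]

lemma pos_comb (a t s : ℝ) (ha : 0 < a) (ht : 0 ≤ t) (hs : 0 ≤ s) (hts : t + s = 1) :
    0 < t + s * a := by
  rcases eq_or_lt_of_le ht with h | h
  · have : s = 1 := by linarith
    simp [← h, this, ha]
  · have : 0 ≤ s * a := mul_nonneg hs ha.le
    linarith

lemma key (b c t s : ℝ) (hb : 0 < b) (hc : 0 < c) (ht : 0 ≤ t) (hs : 0 ≤ s)
    (hts : t + s = 1) : 1 / ((t + s*b) * (t + s*c)) ≤ t + s / (b*c) := by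
  have hb' := pos_comb b t s hb ht hs hts
  have hc' := pos_comb c t s hc ht hs hts
  have hbc : 0 < b * c := mul_pos hb hc
  have hA := auxA b c hb hc
  have hB := auxB b c hb hc
  rw [show t + s / (b*c) = (t*(b*c) + s) / (b*c) by field_simp,
    div_le_div_iff₀ (mul_pos hb' hc') hbc]
  have h1 := mul_nonneg (mul_nonneg (mul_nonneg ht ht) hs) hA
  have h2 := mul_nonneg (mul_nonneg (mul_nonneg ht hs) hs) hB
  have hs' : s = 1 - t := by linarith
  subst hs'
  nlinarith [h1, h2]

lemma perterm (a b c q t s : ℝ) (ha : 0 < a) (hb : 0 < b) (hc : 0 < c) (hq : 0 < q)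
    (ht : 0 ≤ t) (hs : 0 ≤ s) (hts : t + s = 1) :
    q * (t + s*a) / ((t + s*a) * ((t + s*b) * (t + s*c)))
      ≤ t * q + s * (q * a / (a * (b * c))) := by
  have ha' := pos_comb a t s ha ht hs hts
  have hb' := pos_comb b t s hb ht hs hts
  have hc' := pos_comb c t s hc ht hs hts
  have e1 : q * (t + s*a) / ((t + s*a) * ((t + s*b) * (t + s*c)))
      = q * (1 / ((t + s*b) * (t + s*c))) := by
    field_simp
  have e2 : t * q + s * (q * a / (a * (b * c))) = q * (t + s / (b * c)) := by
    field_simp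
  rw [e1, e2]
  exact mul_le_mul_of_nonneg_left (key b c t s hb hc ht hs hts) hq.le

lemma main_scalar (d1 d2 d3 q1 q2 q3 κ t s : ℝ)
    (hd1 : 0 < d1) (hd2 : 0 < d2) (hd3 : 0 < d3)
    (hq1 : 0 < q1) (hq2 : 0 < q2) (hq3 : 0 < q3) (hκ : 0 < κ)
    (ht : 0 ≤ t) (hs : 0 ≤ s) (hts : t + s = 1) :
    (q1*(t+s*d1) + q2*(t+s*d2) + q3*(t+s*d3)) / (((t+s*d1)*((t+s*d2)*(t+s*d3))) / κ)
      ≤ t * ((q1+q2+q3) / (1/κ)) + s * ((q1*d1+q2*d2+q3*d3) / ((d1*(d2*d3)) / κ)) := by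
  have hd1' := pos_comb d1 t s hd1 ht hs hts
  have hd2' := pos_comb d2 t s hd2 ht hs hts
  have hd3' := pos_comb d3 t s hd3 ht hs hts
  have P1 := perterm d1 d2 d3 q1 t s hd1 hd2 hd3 hq1 ht hs hts
  have P2 := perterm d2 d1 d3 q2 t s hd2 hd1 hd3 hq2 ht hs hts
  have P3 := perterm d3 d1 d2 q3 t s hd3 hd1 hd2 hq3 ht hs hts
  have key_ineq : (q1*(t+s*d1) + q2*(t+s*d2) + q3*(t+s*d3)) / ((t+s*d1)*((t+s*d2)*(t+s*d3)))
      ≤ t * (q1+q2+q3) + s * ((q1*d1+q2*d2+q3*d3) / (d1*(d2*d3))) := by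
    have r2 : q2*(t+s*d2) / ((t+s*d1)*((t+s*d2)*(t+s*d3)))
        = q2*(t+s*d2) / ((t+s*d2)*((t+s*d1)*(t+s*d3))) := by ring_nf
    have r3 : q3*(t+s*d3) / ((t+s*d1)*((t+s*d2)*(t+s*d3)))
        = q3*(t+s*d3) / ((t+s*d3)*((t+s*d1)*(t+s*d2))) := by ring_nf
    have l : (q1*(t+s*d1) + q2*(t+s*d2) + q3*(t+s*d3)) / ((t+s*d1)*((t+s*d2)*(t+s*d3)))
        = q1*(t+s*d1) / ((t+s*d1)*((t+s*d2)*(t+s*d3)))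
          + q2*(t+s*d2) / ((t+s*d2)*((t+s*d1)*(t+s*d3)))
          + q3*(t+s*d3) / ((t+s*d3)*((t+s*d1)*(t+s*d2))) := by
      rw [← r2, ← r3]; ring
    have rRHS : t * (q1+q2+q3) + s * ((q1*d1+q2*d2+q3*d3) / (d1*(d2*d3)))
        = (t*q1 + s*(q1*d1/(d1*(d2*d3)))) + (t*q2 + s*(q2*d2/(d2*(d1*d3))))
          + (t*q3 + s*(q3*d3/(d3*(d1*d2)))) := by ring
    rw [l, rRHS]
    have := add_le_add (add_le_add P1 P2) P3
    linarith
  calc (q1*(t+s*d1) + q2*(t+s*d2) + q3*(t+s*d3)) / (((t+s*d1)*((t+s*d2)*(t+s*d3))) / κ)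
      = ((q1*(t+s*d1) + q2*(t+s*d2) + q3*(t+s*d3)) / ((t+s*d1)*((t+s*d2)*(t+s*d3)))) * κ := by
        rw [div_div_eq_mul_div]; ring
    _ ≤ (t * (q1+q2+q3) + s * ((q1*d1+q2*d2+q3*d3) / (d1*(d2*d3)))) * κ :=
        mul_le_mul_of_nonneg_right key_ineq hκ.le
    _ = t * ((q1+q2+q3) / (1/κ)) + s * ((q1*d1+q2*d2+q3*d3) / ((d1*(d2*d3)) / κ)) := by
        rw [div_div_eq_mul_div, div_div_eq_mul_div]; field_simp


lemma posDef_conj {M B : Matrix (Fin 3) (Fin 3) ℂ} (hM : M.PosDef) (hB : B.det ≠ 0) :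
    (Bᴴ * M * B).PosDef := by
  have hinj : Function.Injective B.mulVec :=
    Matrix.mulVec_injective_iff_isUnit.mpr (Matrix.isUnit_iff_isUnit_det _ |>.2 hB.isUnit)
  exact hM.conjTranspose_mul_mul_same hinj

lemma reduce (P N : Matrix (Fin 3) (Fin 3) ℂ) (hdP : P.det ≠ 0) (g : Fin 3 → ℝ)
    (h : Pᴴ * N * P = Matrix.diagonal (fun i => ((g i : ℝ) : ℂ))) :
    N.trace.re = ∑ i, ((P⁻¹ * (P⁻¹)ᴴ) i i).re * g i ∧
      N.det.re = (∏ i, g i) / Complex.normSq P.det := by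
  have hPH : Pᴴ.det ≠ 0 := by
    rw [Matrix.det_conjTranspose]; exact star_ne_zero.mpr hdP
  have hN : N = (Pᴴ)⁻¹ * (Pᴴ * N * P) * P⁻¹ := by
    have e : (Pᴴ)⁻¹ * (Pᴴ * N * P) * P⁻¹ = ((Pᴴ)⁻¹ * Pᴴ) * N * (P * P⁻¹) := by
      simp only [Matrix.mul_assoc]
    rw [e, Matrix.nonsing_inv_mul _ hPH.isUnit, Matrix.mul_nonsing_inv _ hdP.isUnit, Matrix.one_mul,
      Matrix.mul_one]
  constructor
  · have htr : N.trace = ((P⁻¹ * (P⁻¹)ᴴ) * Matrix.diagonal (fun i => ((g i : ℝ) : ℂ))).trace := by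
      conv_lhs => rw [hN, h]
      rw [Matrix.trace_mul_cycle, Matrix.conjTranspose_nonsing_inv]
    rw [htr, Matrix.trace, Complex.re_sum]
    refine Finset.sum_congr rfl fun i _ => ?_
    simp [Matrix.diag, Matrix.mul_diagonal, Complex.mul_re]
  · have hdet : (starRingEnd ℂ) P.det * N.det * P.det = ((∏ i, g i : ℝ) : ℂ) := by
      have := congrArg Matrix.det h
      rwa [Matrix.det_mul, Matrix.det_mul, Matrix.det_conjTranspose, Matrix.det_diagonal,
        ← Complex.ofReal_prod, Complex.star_def] at this
    have hns : (Complex.normSq P.det : ℂ) ≠ 0 :=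
      Complex.ofReal_ne_zero.mpr (Complex.normSq_pos.mpr hdP).ne'
    have hNd : N.det = (((∏ i, g i) / Complex.normSq P.det : ℝ) : ℂ) := by
      rw [Complex.ofReal_div, eq_div_iff hns]
      rw [← Complex.mul_conj P.det]
      linear_combination hdet
    rw [hNd, Complex.ofReal_re]

/-- The function `H ↦ tr H / det H` is convex on the set of 3×3 positive definite
Hermitian matrices. -/
theorem stmt_3 (H₁ H₂ : Matrix (Fin 3) (Fin 3) ℂ)
    (h1 : H₁.PosDef) (h2 : H₂.PosDef) (t : ℝ) (ht : t ∈ Set.Icc (0 : ℝ) 1) :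
    ((t : ℂ) • H₁ + ((1 - t : ℝ) : ℂ) • H₂).trace.re /
        ((t : ℂ) • H₁ + ((1 - t : ℝ) : ℂ) • H₂).det.re
      ≤ t * (H₁.trace.re / H₁.det.re) + (1 - t) * (H₂.trace.re / H₂.det.re) := by
  obtain ⟨ht0, ht1⟩ := ht
  set s : ℝ := 1 - t with hs_def
  have hs0 : 0 ≤ s := by simp [hs_def]; linarith
  have hts : t + s = 1 := by simp [hs_def]
  -- square root of H₁
  open scoped MatrixOrder in set S := CFC.sqrt H₁ with hSdef
  have hS : S.PosSemidef := by
    open scoped MatrixOrder in exact (CFC.sqrt_nonneg H₁).posSemidef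
  have hSS : S * S = H₁ := by
    open scoped MatrixOrder in exact CFC.sqrt_mul_sqrt_self H₁ h1.posSemidef.nonneg
  have hSH : S.IsHermitian := hS.isHermitian
  have hdS : S.det ≠ 0 := by
    intro h0
    have : H₁.det = 0 := by rw [← hSS, Matrix.det_mul, h0, zero_mul]
    exact h1.det_pos.ne' this
  have hdSi : S⁻¹.det ≠ 0 := by
    rw [Matrix.det_nonsing_inv, Ring.inverse_eq_inv']
    exact inv_ne_zero hdS
  have hSiH : S⁻¹.IsHermitian := hSH.inv
  -- diagonalize M := S⁻¹ H₂ S⁻¹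
  set M := S⁻¹ * H₂ * S⁻¹ with hMdef
  have hM : M.PosDef := by
    have := posDef_conj h2 hdSi
    rwa [hSiH.eq] at this
  have hMH := hM.isHermitian
  set d := hMH.eigenvalues with hddef
  have hd : ∀ i, 0 < d i := hM.eigenvalues_pos
  set U : Matrix (Fin 3) (Fin 3) ℂ := (hMH.eigenvectorUnitary : Matrix (Fin 3) (Fin 3) ℂ) with hUdef
  have hspec : M = U * Matrix.diagonal (RCLike.ofReal ∘ d) * star U := hMH.spectral_theorem
  have hU1 : star U * U = 1 := Matrix.mem_unitaryGroup_iff'.mp hMH.eigenvectorUnitary.2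
  have hU2 : U * star U = 1 := Matrix.mem_unitaryGroup_iff.mp hMH.eigenvectorUnitary.2
  have hdU : U.det ≠ 0 := by
    intro h0
    have := congrArg Matrix.det hU2
    rw [Matrix.det_mul, h0, zero_mul, Matrix.det_one] at this
    exact zero_ne_one this
  set P := S⁻¹ * U with hPdef
  have hdP : P.det ≠ 0 := by
    rw [hPdef, Matrix.det_mul]
    exact mul_ne_zero hdSi hdU
  -- mid computation
  have hmid : S⁻¹ * H₁ * S⁻¹ = 1 := by
    rw [← hSS, show S⁻¹ * (S * S) * S⁻¹ = (S⁻¹ * S) * (S * S⁻¹) by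
      simp only [Matrix.mul_assoc],
      Matrix.nonsing_inv_mul _ hdS.isUnit, Matrix.mul_nonsing_inv _ hdS.isUnit, one_mul]
  have hPHP : Pᴴ = star U * S⁻¹ := by
    rw [hPdef, Matrix.conjTranspose_mul, hSiH.eq, Matrix.star_eq_conjTranspose]
  have hPH1 : Pᴴ * H₁ * P = Matrix.diagonal (fun _ => ((1 : ℝ) : ℂ)) := by
    rw [hPdef, hPHP]
    calc (star U * S⁻¹) * H₁ * (S⁻¹ * U) = star U * ((S⁻¹ * H₁ * S⁻¹) * U) := by
          simp only [Matrix.mul_assoc]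
      _ = star U * U := by rw [hmid, Matrix.one_mul]
      _ = 1 := hU1
      _ = _ := by simp
  have hPH2 : Pᴴ * H₂ * P = Matrix.diagonal (fun i => ((d i : ℝ) : ℂ)) := by
    rw [hPdef, hPHP]
    calc (star U * S⁻¹) * H₂ * (S⁻¹ * U) = star U * ((S⁻¹ * H₂ * S⁻¹) * U) := by
          simp only [Matrix.mul_assoc]
      _ = star U * (U * Matrix.diagonal (RCLike.ofReal ∘ d) * star U * U) := by
          rw [← hMdef, hspec]
      _ = (star U * U) * Matrix.diagonal (RCLike.ofReal ∘ d) * (star U * U) := by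
          simp only [Matrix.mul_assoc]
      _ = Matrix.diagonal (fun i => ((d i : ℝ) : ℂ)) := by
          rw [hU1, Matrix.one_mul, Matrix.mul_one]
          rfl
  have hPHt : Pᴴ * ((t : ℂ) • H₁ + ((s : ℝ) : ℂ) • H₂) * P
      = Matrix.diagonal (fun i => ((t + s * d i : ℝ) : ℂ)) := by
    rw [Matrix.mul_add, Matrix.add_mul, Matrix.mul_smul, Matrix.smul_mul,
      Matrix.mul_smul, Matrix.smul_mul, hPH1, hPH2]
    ext i j
    by_cases h : i = j <;>
      simp [h, Matrix.diagonal, Complex.ofReal_add, Complex.ofReal_mul]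
  obtain ⟨trt, dett⟩ := reduce P _ hdP (fun i => t + s * d i) hPHt
  obtain ⟨tr1, det1⟩ := reduce P H₁ hdP (fun _ => 1) hPH1
  obtain ⟨tr2, det2⟩ := reduce P H₂ hdP d hPH2
  -- positivity of diagonal entries of Q
  have hq : ∀ i, 0 < ((P⁻¹ * (P⁻¹)ᴴ) i i).re := by
    intro i
    have hre : ((P⁻¹ * (P⁻¹)ᴴ) i i).re = ∑ j, Complex.normSq (P⁻¹ i j) := by
      rw [Matrix.mul_apply, Complex.re_sum]
      refine Finset.sum_congr rfl fun j _ => ?_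
      rw [Matrix.conjTranspose_apply, Complex.star_def, Complex.mul_conj]
      simp
    rw [hre]
    have hdPi : P⁻¹.det ≠ 0 := by
      rw [Matrix.det_nonsing_inv, Ring.inverse_eq_inv']
      exact inv_ne_zero hdP
    obtain ⟨j, hj⟩ : ∃ j, P⁻¹ i j ≠ 0 := by
      by_contra hcon
      push_neg at hcon
      exact hdPi (Matrix.det_eq_zero_of_row_eq_zero i hcon)
    exact Finset.sum_pos' (fun j _ => Complex.normSq_nonneg _)
      ⟨j, Finset.mem_univ j, Complex.normSq_pos.mpr hj⟩
  have hκ : 0 < Complex.normSq P.det := Complex.normSq_pos.mpr hdP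
  rw [trt, dett, tr1, det1, tr2, det2]
  simp only [Fin.sum_univ_three, Fin.prod_univ_three]
  exact le_of_eq_of_le (by ring)
    (le_of_le_of_eq (main_scalar (d 0) (d 1) (d 2)
      (((P⁻¹ * (P⁻¹)ᴴ) 0 0).re) (((P⁻¹ * (P⁻¹)ᴴ) 1 1).re) (((P⁻¹ * (P⁻¹)ᴴ) 2 2).re)
      (Complex.normSq P.det) t s (hd 0) (hd 1) (hd 2) (hq 0) (hq 1) (hq 2) hκ ht0 hs0 hts)
      (by ring))
end

section
/- The function H ↦ 1/det(H) is convex on the set of 3×3 positive definite Hermitian matrices; that is, for all positive definite Hermitian H₁, H₂ and all t ∈ [0,1], 1/det(tH₁+(1−t)H₂) ≤ t/det(H₁) + (1−t)/det(H₂). -/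
open ComplexOrder

lemma scalar_ineq {n : ℕ} (lam : Fin n → ℝ) (hl : ∀ i, 0 < lam i) {t : ℝ}
    (ht0 : 0 ≤ t) (ht1 : t ≤ 1) :
    1 / ∏ i, (t + (1 - t) * lam i) ≤ t + (1 - t) / ∏ i, lam i := by
  have ht1' : 0 ≤ 1 - t := by linarith
  have hP : 0 < ∏ i, lam i := Finset.prod_pos fun i _ => hl i
  have hQ : ∀ i, lam i ^ (1 - t) ≤ t + (1 - t) * lam i := fun i => by
    have := Real.geom_mean_le_arith_mean2_weighted ht0 ht1' zero_le_one (hl i).le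
      (by ring)
    simpa using this
  have h1 : (∏ i, lam i) ^ (1 - t) ≤ ∏ i, (t + (1 - t) * lam i) := by
    rw [← Real.finset_prod_rpow _ _ (fun i _ => (hl i).le)]
    exact Finset.prod_le_prod (fun i _ => (Real.rpow_pos_of_pos (hl i) _).le)
      (fun i _ => hQ i)
  have h2 : 1 / ∏ i, (t + (1 - t) * lam i) ≤ (1 / ∏ i, lam i) ^ (1 - t) := by
    rw [one_div, one_div, Real.inv_rpow hP.le]
    exact inv_anti₀ (Real.rpow_pos_of_pos hP _) h1
  refine h2.trans ?_
  have := Real.geom_mean_le_arith_mean2_weighted ht0 ht1' zero_le_one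
    (by positivity : (0:ℝ) ≤ 1 / ∏ i, lam i) (by ring)
  simpa [div_eq_mul_inv] using this

/-- The function `H ↦ 1 / det H` is convex on the set of 3×3 positive definite
Hermitian matrices. -/
theorem stmt_4 (H₁ H₂ : Matrix (Fin 3) (Fin 3) ℂ)
    (h1 : H₁.PosDef) (h2 : H₂.PosDef) (t : ℝ) (ht : t ∈ Set.Icc (0 : ℝ) 1) :
    1 / ((t : ℂ) • H₁ + ((1 - t : ℝ) : ℂ) • H₂).det.re
      ≤ t / H₁.det.re + (1 - t) / H₂.det.re := by
  obtain ⟨ht0, ht1⟩ := ht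
  have hA := h1.posSemidef
  open MatrixOrder in
  set S := CFC.sqrt H₁ with hSdef
  open MatrixOrder in
  have hSps : S.PosSemidef := Matrix.nonneg_iff_posSemidef.mp (CFC.sqrt_nonneg H₁)
  have hSH : S.IsHermitian := hSps.isHermitian
  open MatrixOrder in
  have hSS : S * S = H₁ := CFC.sqrt_mul_sqrt_self H₁ hA.nonneg
  -- determinants are positive reals
  have hdA : (0:ℂ) < H₁.det := h1.det_pos
  have hdB : (0:ℂ) < H₂.det := h2.det_pos
  have haim : H₁.det.im = 0 := (Complex.lt_def.mp hdA).2.symm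
  have hbim : H₂.det.im = 0 := (Complex.lt_def.mp hdB).2.symm
  have hare : 0 < H₁.det.re := by simpa using (Complex.lt_def.mp hdA).1
  have hbre : 0 < H₂.det.re := by simpa using (Complex.lt_def.mp hdB).1
  have hdetSS : S.det * S.det = H₁.det := by rw [← Matrix.det_mul, hSS]
  have hdetS_ne : S.det ≠ 0 := by
    intro h; rw [h, mul_zero] at hdetSS; exact hdA.ne' hdetSS.symm
  have hSinv : S * S⁻¹ = 1 := Matrix.mul_nonsing_inv _ (isUnit_iff_ne_zero.mpr hdetS_ne)
  have hinvS : S⁻¹ * S = 1 := Matrix.nonsing_inv_mul _ (isUnit_iff_ne_zero.mpr hdetS_ne)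
  set C := S⁻¹ * H₂ * S⁻¹ with hCdef
  have hCps : C.PosSemidef := by
    have := h2.posSemidef.mul_mul_conjTranspose_same S⁻¹
    rwa [hSH.inv.eq] at this
  have hC : C.IsHermitian := hCps.isHermitian
  set lam := hC.eigenvalues with hlamdef
  have hBC : S * C * S = H₂ := by
    rw [hCdef, Matrix.mul_assoc S⁻¹ H₂ S⁻¹, ← Matrix.mul_assoc S S⁻¹ _, hSinv, one_mul,
      Matrix.mul_assoc, hinvS, mul_one]
  have hdetC : C.det = ∏ i, (lam i : ℂ) := hC.det_eq_prod_eigenvalues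
  have hdetB : H₂.det = H₁.det * C.det := by
    rw [← hBC, Matrix.det_mul, Matrix.det_mul, ← hdetSS]; ring
  have hdetC_ne : C.det ≠ 0 := by
    intro h; rw [hdetB, h, mul_zero] at hdB; exact hdB.ne' rfl
  have hlam_ne : ∀ i, lam i ≠ 0 := by
    intro i hi
    apply hdetC_ne
    rw [hdetC]
    exact Finset.prod_eq_zero (Finset.mem_univ i) (by rw [hi]; norm_num)
  have hlam_pos : ∀ i, 0 < lam i := fun i =>
    lt_of_le_of_ne (hCps.eigenvalues_nonneg i) (Ne.symm (hlam_ne i))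
  -- spectral theorem for C
  set U : Matrix (Fin 3) (Fin 3) ℂ := (hC.eigenvectorUnitary : Matrix (Fin 3) (Fin 3) ℂ) with hUdef
  have hUU : U * star U = 1 := Matrix.mem_unitaryGroup_iff.mp hC.eigenvectorUnitary.2
  have hspec : C = U * Matrix.diagonal (RCLike.ofReal ∘ lam) * star U := hC.spectral_theorem
  set c : ℂ := ((1 - t : ℝ) : ℂ) with hcdef
  set N : Matrix (Fin 3) (Fin 3) ℂ := (t:ℂ) • 1 + c • C with hNdef
  have hMN : (t : ℂ) • H₁ + c • H₂ = S * N * S := by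
    rw [hNdef, Matrix.mul_add, Matrix.add_mul, Matrix.mul_smul, Matrix.smul_mul,
      Matrix.mul_smul, Matrix.smul_mul, mul_one, hSS, hBC]
  have hAre : H₁.det = ((H₁.det.re : ℝ) : ℂ) := Complex.ext (by simp) (by simp [haim])
  set a : ℝ := H₁.det.re with hadef
  have hmid : (t:ℂ) • (1 : Matrix (Fin 3) (Fin 3) ℂ) + c • Matrix.diagonal (RCLike.ofReal ∘ lam)
      = Matrix.diagonal (fun i => (t:ℂ) + c * (lam i : ℂ)) := by
    ext i j
    rcases eq_or_ne i j with rfl | h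
    · simp
    · simp [Matrix.diagonal_apply_ne _ h, Matrix.one_apply_ne h]
  have hNdet : N.det = ∏ i, ((t:ℂ) + c * (lam i : ℂ)) := by
    have hN2 : N = U * ((t:ℂ) • 1 + c • Matrix.diagonal (RCLike.ofReal ∘ lam)) * star U := by
      rw [hNdef, Matrix.mul_add, Matrix.add_mul, Matrix.mul_smul, Matrix.smul_mul,
        Matrix.mul_smul, Matrix.smul_mul, mul_one, hUU, ← hspec]
    have hU1 : U.det * (star U).det = 1 := by rw [← Matrix.det_mul, hUU, Matrix.det_one]
    rw [hN2, Matrix.det_mul, Matrix.det_mul, hmid, Matrix.det_diagonal]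
    calc U.det * (∏ i, ((t:ℂ) + c * (lam i : ℂ))) * (star U).det
        = (∏ i, ((t:ℂ) + c * (lam i : ℂ))) * (U.det * (star U).det) := by ring
      _ = ∏ i, ((t:ℂ) + c * (lam i : ℂ)) := by rw [hU1, mul_one]
  set P : ℝ := ∏ i, lam i with hPdef
  set Q : ℝ := ∏ i, (t + (1 - t) * lam i) with hQdef
  have hprodQ : (∏ i, ((t:ℂ) + c * (lam i : ℂ))) = ((Q : ℝ) : ℂ) := by
    rw [hQdef]
    push_cast
    exact Finset.prod_congr rfl fun i _ => by rw [hcdef]; push_cast; ring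
  have hprodP : (∏ i, ((lam i : ℝ) : ℂ)) = ((P : ℝ) : ℂ) := by
    rw [hPdef]; push_cast; rfl
  have hdetM : ((t : ℂ) • H₁ + c • H₂).det = ((a : ℝ) : ℂ) * ((Q : ℝ) : ℂ) := by
    rw [hMN, Matrix.det_mul, Matrix.det_mul, hNdet, hprodQ]
    calc S.det * ((Q : ℝ) : ℂ) * S.det = (S.det * S.det) * ((Q : ℝ) : ℂ) := by ring
      _ = ((a : ℝ) : ℂ) * ((Q : ℝ) : ℂ) := by rw [hdetSS, hAre]
  have hdetBc : H₂.det = ((a : ℝ) : ℂ) * ((P : ℝ) : ℂ) := by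
    rw [hdetB, hdetC, hprodP, hAre]
  have hMre : ((t : ℂ) • H₁ + c • H₂).det.re = a * Q := by
    rw [hdetM, ← Complex.ofReal_mul, Complex.ofReal_re]
  have hBre : H₂.det.re = a * P := by
    rw [hdetBc, ← Complex.ofReal_mul, Complex.ofReal_re]
  rw [hMre, hBre]
  have hPpos : 0 < P := Finset.prod_pos fun i _ => hlam_pos i
  have hQpos : 0 < Q := Finset.prod_pos fun i _ => by
    rcases ht1.eq_or_lt with h | h
    · rw [h]; norm_num
    · have : 0 < (1 - t) * lam i := mul_pos (by linarith) (hlam_pos i)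
      linarith
  have key := scalar_ineq lam hlam_pos ht0 ht1
  rw [← hPdef, ← hQdef] at key
  calc 1 / (a * Q) = (1 / Q) / a := by rw [div_div, one_div, one_div, mul_comm]
    _ ≤ (t + (1 - t) / P) / a := by gcongr
    _ = t / a + (1 - t) / (a * P) := by field_simp
end

section
/- The set S = {H : H is a 3×3 positive definite Hermitian matrix with 6·det(H) > tr(adj(H))} is a convex subset of the real vector space of 3×3 Hermitian matrices. -/
open ComplexOrder

open Matrix in
private lemma herm_dot (M : Matrix (Fin 3) (Fin 3) ℂ) (hM : M.IsHermitian)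
    (a b : Fin 3 → ℂ) : star a ⬝ᵥ M *ᵥ b = star (M *ᵥ a) ⬝ᵥ b := by
  rw [star_mulVec, hM.eq, dotProduct_mulVec]

open Matrix in
/-- Key inequality: for posdef `M`, `Re (x*Mx) - Re(x*v) - Re(v*x) + Re(v*M⁻¹v) ≥ 0`,
i.e. `v*M⁻¹v` is the sup of the affine-in-`M` functions `2Re(v*x) - x*Mx`. -/
private lemma key_ineq {M : Matrix (Fin 3) (Fin 3) ℂ} (hM : M.PosDef)
    (v x : Fin 3 → ℂ) :
    0 ≤ (star x ⬝ᵥ M *ᵥ x).re - (star x ⬝ᵥ v).re - (star v ⬝ᵥ x).re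
      + (star (M⁻¹ *ᵥ v) ⬝ᵥ v).re := by
  set w : Fin 3 → ℂ := M⁻¹ *ᵥ v with hw
  have hMw : M *ᵥ w = v := by
    rw [hw, mulVec_mulVec, Matrix.mul_nonsing_inv _ (isUnit_iff_ne_zero.mpr hM.det_pos.ne'),
      one_mulVec]
  have h0 : (0 : ℂ) ≤ star (x - w) ⬝ᵥ M *ᵥ (x - w) := hM.posSemidef.dotProduct_mulVec_nonneg (x - w)
  have hexp : star (x - w) ⬝ᵥ M *ᵥ (x - w)
      = star x ⬝ᵥ M *ᵥ x - star x ⬝ᵥ v - star v ⬝ᵥ x + star w ⬝ᵥ v := by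
    have h3 : star w ⬝ᵥ M *ᵥ x = star v ⬝ᵥ x := by
      rw [herm_dot M hM.isHermitian, hMw]
    have h4 : star w ⬝ᵥ M *ᵥ w = star w ⬝ᵥ v := by rw [hMw]
    rw [star_sub, mulVec_sub, sub_dotProduct, dotProduct_sub, dotProduct_sub, hMw, h3]
    ring
  have := (Complex.le_def.mp h0).1
  rw [hexp] at this
  simpa using this

open Matrix in
/-- Positive real multiple of a posdef matrix is posdef. -/
private lemma posdef_smul {A : Matrix (Fin 3) (Fin 3) ℂ} (hA : A.PosDef)
    {a : ℝ} (ha : 0 < a) : (a • A).PosDef := by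
  refine posDef_iff_dotProduct_mulVec.mpr ⟨?_, ?_⟩
  · show (a • A)ᴴ = a • A
    rw [conjTranspose_smul, star_trivial, hA.isHermitian.eq]
  · intro x hx
    have h := hA.dotProduct_mulVec_pos hx
    have : star x ⬝ᵥ (a • A) *ᵥ x = a • (star x ⬝ᵥ A *ᵥ x) := by
      rw [smul_mulVec, dotProduct_smul]
    rw [this, Complex.real_smul]
    exact mul_pos (by exact_mod_cast ha) h

open Matrix in
private lemma dot_comb (a b : ℝ) (A B : Matrix (Fin 3) (Fin 3) ℂ) (x : Fin 3 → ℂ) :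
    (star x ⬝ᵥ (a • A + b • B) *ᵥ x).re
      = a * (star x ⬝ᵥ A *ᵥ x).re + b * (star x ⬝ᵥ B *ᵥ x).re := by
  rw [add_mulVec, dotProduct_add, smul_mulVec, smul_mulVec,
    dotProduct_smul, dotProduct_smul, Complex.add_re, Complex.smul_re, Complex.smul_re]
  simp [smul_eq_mul]

open Matrix in
/-- For posdef `H`, the condition `6 det H > tr adj H` is equivalent to `tr H⁻¹ < 6`. -/
private lemma cond_iff {H : Matrix (Fin 3) (Fin 3) ℂ} (hH : H.PosDef) :
    6 * H.det.re > H.adjugate.trace.re ↔ (H⁻¹).trace.re < 6 := by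
  have hdet : (0 : ℂ) < H.det := hH.det_pos
  have hdet' := Complex.lt_def.mp hdet
  have hd : 0 < H.det.re := by simpa using hdet'.1
  have him : H.det.im = 0 := by simpa using hdet'.2.symm
  have hdne : H.det ≠ 0 := hdet.ne'
  have hadj : H.adjugate = H.det • H⁻¹ := by
    rw [Matrix.inv_def, Ring.inverse_eq_inv', smul_smul, mul_inv_cancel₀ hdne, one_smul]
  rw [hadj, trace_smul, smul_eq_mul, Complex.mul_re, him]
  simp only [zero_mul, sub_zero]
  constructor
  · intro h; nlinarith
  · intro h; nlinarith

open Matrix in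
private lemma trace_inv_re (M : Matrix (Fin 3) (Fin 3) ℂ) :
    (M⁻¹).trace.re = ∑ i, ((M⁻¹) i i).re := by
  rw [Matrix.trace]
  simp [Matrix.diag, Complex.re_sum]

open Matrix in
/-- The main convexity argument for the trace of the inverse. -/
private lemma trace_inv_convex {A B : Matrix (Fin 3) (Fin 3) ℂ}
    (hA : A.PosDef) (hB : B.PosDef) {a b : ℝ} (ha : 0 < a) (hb : 0 < b)
    (hab : a + b = 1) (hC : (a • A + b • B).PosDef) :
    ((a • A + b • B)⁻¹).trace.re ≤ a * (A⁻¹).trace.re + b * (B⁻¹).trace.re := by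
  set C := a • A + b • B with hCdef
  have hdet : IsUnit C.det := isUnit_iff_ne_zero.mpr hC.det_pos.ne'
  have key : ∀ i : Fin 3, ((C⁻¹) i i).re
      ≤ a * ((A⁻¹) i i).re + b * ((B⁻¹) i i).re := by
    intro i
    set v : Fin 3 → ℂ := Pi.single i 1 with hv
    set x : Fin 3 → ℂ := C⁻¹ *ᵥ v with hx
    have hCx : C *ᵥ x = v := by
      rw [hx, mulVec_mulVec, Matrix.mul_nonsing_inv _ hdet, one_mulVec]
    have hxv : star x ⬝ᵥ v = star (x i) := by
      rw [hv, dotProduct_single, mul_one, Pi.star_apply]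
    have hvx : star v ⬝ᵥ x = x i := by
      rw [hv, ← Pi.single_star, star_one, single_dotProduct, one_mul]
    have hxi : x i = (C⁻¹) i i := by
      rw [hx, hv, mulVec_single]; simp
    have hxCx : (star x ⬝ᵥ C *ᵥ x).re = ((C⁻¹) i i).re := by
      rw [hCx, hxv, ← hxi, Complex.star_def, Complex.conj_re]
    have hAinv : (star (A⁻¹ *ᵥ v) ⬝ᵥ v).re = ((A⁻¹) i i).re := by
      rw [hv, dotProduct_single, mul_one, Pi.star_apply, mulVec_single]
      simp [Complex.star_def]
    have hBinv : (star (B⁻¹ *ᵥ v) ⬝ᵥ v).re = ((B⁻¹) i i).re := by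
      rw [hv, dotProduct_single, mul_one, Pi.star_apply, mulVec_single]
      simp [Complex.star_def]
    have kA := key_ineq hA v x
    have kB := key_ineq hB v x
    rw [hAinv] at kA
    rw [hBinv] at kB
    have kA' : (star x ⬝ᵥ v).re + (star v ⬝ᵥ x).re - (star x ⬝ᵥ A *ᵥ x).re
        ≤ ((A⁻¹) i i).re := by linarith
    have kB' : (star x ⬝ᵥ v).re + (star v ⬝ᵥ x).re - (star x ⬝ᵥ B *ᵥ x).re
        ≤ ((B⁻¹) i i).re := by linarith
    have hcomb2 := add_le_add (mul_le_mul_of_nonneg_left kA' ha.le)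
      (mul_le_mul_of_nonneg_left kB' hb.le)
    have hlhs : a * ((star x ⬝ᵥ v).re + (star v ⬝ᵥ x).re - (star x ⬝ᵥ A *ᵥ x).re)
        + b * ((star x ⬝ᵥ v).re + (star v ⬝ᵥ x).re - (star x ⬝ᵥ B *ᵥ x).re)
        = ((C⁻¹) i i).re := by
      have := dot_comb a b A B x
      rw [← hCdef] at this
      rw [hxv, hvx]
      have h1 : (star (x i)).re = (x i).re := by
        rw [Complex.star_def, Complex.conj_re]
      rw [h1]
      have h2 : a * ((x i).re + (x i).re - (star x ⬝ᵥ A *ᵥ x).re)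
          + b * ((x i).re + (x i).re - (star x ⬝ᵥ B *ᵥ x).re)
          = (a + b) * (2 * (x i).re) - (star x ⬝ᵥ C *ᵥ x).re := by
        rw [this]; ring
      rw [h2, hab, hxCx, hxi]
      ring
    rw [← hlhs]
    exact hcomb2
  rw [trace_inv_re, trace_inv_re, trace_inv_re, Finset.mul_sum, Finset.mul_sum,
    ← Finset.sum_add_distrib]
  exact Finset.sum_le_sum fun i _ => key i

/-- The set of 3×3 positive definite Hermitian matrices `H` with
`6·det H > tr (adj H)` is convex. -/
theorem stmt_6 :
    Convex ℝ {H : Matrix (Fin 3) (Fin 3) ℂ |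
      H.PosDef ∧ 6 * H.det.re > H.adjugate.trace.re} := by
  intro A hA B hB a b ha hb hab
  simp only [Set.mem_setOf_eq] at hA hB ⊢
  rcases eq_or_lt_of_le ha with rfl | ha'
  · have hb1 : b = 1 := by linarith
    simpa [hb1] using hB
  rcases eq_or_lt_of_le hb with rfl | hb'
  · have ha1 : a = 1 := by linarith
    simpa [ha1] using hA
  have hC : (a • A + b • B).PosDef :=
    (posdef_smul hA.1 ha').add (posdef_smul hB.1 hb')
  refine ⟨hC, (cond_iff hC).mpr ?_⟩
  have h1 := (cond_iff hA.1).mp hA.2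
  have h2 := (cond_iff hB.1).mp hB.2
  have h3 := trace_inv_convex hA.1 hB.1 ha' hb' hab hC
  calc ((a • A + b • B)⁻¹).trace.re
      ≤ a * (A⁻¹).trace.re + b * (B⁻¹).trace.re := h3
    _ < a * 6 + b * 6 := by
        exact add_lt_add (mul_lt_mul_of_pos_left h1 ha') (mul_lt_mul_of_pos_left h2 hb')
    _ = 6 := by rw [← add_mul, hab]; ring
end

section
/- Let H₁ and H₂ be 3×3 positive definite Hermitian matrices satisfying 6·det(H_i) > tr(adj(H_i)) for i = 1,2, and set C = 1 − tr(adj(H₁))/(6·det(H₁)), so that C ∈ (0,1) depends only on H₁. Then for every t ∈ [0,1], the matrix H_t = t·H₁ + (1−t)·H₂ satisfies: 6·H_t − (1 + C·t)·I is positive definite. -/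
open ComplexOrder

open Matrix in
lemma aux_posDef_unitary_conj {n : Type*} [Fintype n] [DecidableEq n]
    {A : Matrix n n ℂ} (hA : A.PosDef) (U : Matrix.unitaryGroup n ℂ) :
    ((U : Matrix n n ℂ) * A * star (U : Matrix n n ℂ)).PosDef := by
  have hUU : (U : Matrix n n ℂ) * star (U : Matrix n n ℂ) = 1 :=
    Unitary.mul_star_self_of_mem U.2
  refine Matrix.PosDef.of_dotProduct_mulVec_pos ?_ ?_
  · have h := hA.1
    unfold Matrix.IsHermitian at h ⊢
    simp only [Matrix.star_eq_conjTranspose] at *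
    rw [conjTranspose_mul, conjTranspose_mul, conjTranspose_conjTranspose, h, mul_assoc]
  · intro x hx
    set y := star (U : Matrix n n ℂ) *ᵥ x with hy
    have hyx : (U : Matrix n n ℂ) *ᵥ y = x := by
      rw [hy, mulVec_mulVec, hUU, one_mulVec]
    have hy0 : y ≠ 0 := by
      intro h0
      apply hx
      rw [← hyx, h0, mulVec_zero]
    have hstar : star y = star x ᵥ* (U : Matrix n n ℂ) := by
      rw [hy, star_mulVec, Matrix.star_eq_conjTranspose, conjTranspose_conjTranspose]
    have key : star x ⬝ᵥ ((U : Matrix n n ℂ) * A * star (U : Matrix n n ℂ)) *ᵥ x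
        = star y ⬝ᵥ A *ᵥ y := by
      rw [← mulVec_mulVec, ← mulVec_mulVec, dotProduct_mulVec, ← hstar, ← hy]
    rw [key]
    exact hA.dotProduct_mulVec_pos hy0

open Matrix in
lemma aux_smul_sub_smul_one_posDef {n : Type*} [Fintype n] [DecidableEq n]
    {H : Matrix n n ℂ} (hH : H.IsHermitian) {b a : ℝ}
    (h : ∀ i, a < b * hH.eigenvalues i) :
    ((b : ℂ) • H - (a : ℂ) • 1).PosDef := by
  set U := hH.eigenvectorUnitary
  have hUU : (U : Matrix n n ℂ) * star (U : Matrix n n ℂ) = 1 :=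
    Unitary.mul_star_self_of_mem U.2
  have hD : Matrix.diagonal (fun i => ((b * hH.eigenvalues i - a : ℝ) : ℂ))
      = (b : ℂ) • Matrix.diagonal (RCLike.ofReal ∘ hH.eigenvalues)
        - (a : ℂ) • (1 : Matrix n n ℂ) := by
    ext i j
    rcases eq_or_ne i j with rfl | hij
    · simp only [Matrix.diagonal_apply_eq, Matrix.sub_apply, Matrix.smul_apply,
        Matrix.one_apply_eq, Function.comp_apply, smul_eq_mul, mul_one]
      push_cast
      rfl
    · simp [Matrix.diagonal_apply_ne _ hij, Matrix.one_apply_ne hij]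
  have key : (b : ℂ) • H - (a : ℂ) • 1
      = (U : Matrix n n ℂ) *
        Matrix.diagonal (fun i => ((b * hH.eigenvalues i - a : ℝ) : ℂ)) *
        star (U : Matrix n n ℂ) := by
    rw [hD, Matrix.mul_sub, Matrix.sub_mul, Matrix.mul_smul, Matrix.smul_mul,
      Matrix.mul_smul, Matrix.smul_mul, mul_one, hUU, ← Unitary.conjStarAlgAut_apply (S := ℂ), ← hH.spectral_theorem]
  rw [key]
  refine aux_posDef_unitary_conj (Matrix.PosDef.diagonal fun i => ?_) U
  rw [Complex.zero_lt_real]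
  linarith [h i]

open Matrix in
lemma aux_trace_adjugate {n : Type*} [Fintype n] [DecidableEq n]
    {H : Matrix n n ℂ} (hH : H.IsHermitian) :
    H.adjugate.trace
      = ((∑ i, ∏ j ∈ Finset.univ.erase i, hH.eigenvalues j : ℝ) : ℂ) := by
  set U := hH.eigenvectorUnitary
  have hUU : star (U : Matrix n n ℂ) * (U : Matrix n n ℂ) = 1 :=
    Unitary.star_mul_self_of_mem U.2
  conv_lhs => rw [hH.spectral_theorem, Unitary.conjStarAlgAut_apply]
  rw [adjugate_mul_distrib, adjugate_mul_distrib, ← Matrix.mul_assoc, trace_mul_cycle,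
    ← adjugate_mul_distrib, hUU, adjugate_one, one_mul,
    adjugate_diagonal, trace_diagonal]
  push_cast
  rfl

open Matrix in
lemma aux_bounds {n : Type*} [Fintype n] [DecidableEq n] [Nonempty n]
    {H : Matrix n n ℂ} (hH : H.PosDef) :
    0 < H.adjugate.trace.re ∧
    ∀ i, H.det.re ≤ H.adjugate.trace.re * hH.1.eigenvalues i := by
  have hμ : ∀ i, 0 < hH.1.eigenvalues i := hH.eigenvalues_pos
  have hT : H.adjugate.trace.re = ∑ i, ∏ j ∈ Finset.univ.erase i, hH.1.eigenvalues j := by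
    rw [aux_trace_adjugate hH.1, Complex.ofReal_re]
  have hd : H.det.re = ∏ i, hH.1.eigenvalues i := by
    rw [hH.1.det_eq_prod_eigenvalues]
    norm_cast
  have hterm : ∀ i, 0 < ∏ j ∈ Finset.univ.erase i, hH.1.eigenvalues j := fun i =>
    Finset.prod_pos fun j _ => hμ j
  constructor
  · rw [hT]
    exact Finset.sum_pos (fun i _ => hterm i) Finset.univ_nonempty
  · intro i
    have h1 : ∏ j ∈ Finset.univ.erase i, hH.1.eigenvalues j ≤ H.adjugate.trace.re := by
      rw [hT]
      exact Finset.single_le_sum (fun j _ => (hterm j).le) (Finset.mem_univ i)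
    have h2 : H.det.re = hH.1.eigenvalues i * ∏ j ∈ Finset.univ.erase i, hH.1.eigenvalues j := by
      rw [hd, Finset.mul_prod_erase _ _ (Finset.mem_univ i)]
    nlinarith [hμ i]

open Matrix in
lemma aux_smul_posDef {n : Type*} [Fintype n] {A : Matrix n n ℂ}
    (hA : A.PosDef) {r : ℝ} (hr : 0 < r) : ((r : ℂ) • A).PosDef := by
  refine Matrix.PosDef.of_dotProduct_mulVec_pos ?_ ?_
  · have h := hA.1
    unfold Matrix.IsHermitian at h ⊢
    rw [conjTranspose_smul, h, Complex.star_def, Complex.conj_ofReal]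
  · intro x hx
    rw [smul_mulVec, dotProduct_smul, smul_eq_mul]
    exact mul_pos (Complex.zero_lt_real.mpr hr) (hA.dotProduct_mulVec_pos hx)

open Matrix in
lemma aux_smul_posSemidef {n : Type*} [Fintype n] {A : Matrix n n ℂ}
    (hA : A.PosDef) {r : ℝ} (hr : 0 ≤ r) : ((r : ℂ) • A).PosSemidef := by
  refine Matrix.PosSemidef.of_dotProduct_mulVec_nonneg ?_ ?_
  · have h := hA.1
    unfold Matrix.IsHermitian at h ⊢
    rw [conjTranspose_smul, h, Complex.star_def, Complex.conj_ofReal]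
  · intro x
    rw [smul_mulVec, dotProduct_smul, smul_eq_mul]
    exact mul_nonneg (Complex.zero_le_real.mpr hr) (hA.posSemidef.dotProduct_mulVec_nonneg x)

/-- If `H₁`, `H₂` are 3×3 positive definite Hermitian matrices with
`6·det Hᵢ > tr (adj Hᵢ)` and `C = 1 − tr (adj H₁)/(6·det H₁)`, then `C ∈ (0,1)` and
for every `t ∈ [0,1]` the matrix `H_t = t·H₁ + (1−t)·H₂` satisfies
`6·H_t − (1 + C·t)·I > 0`. -/
theorem stmt_7 (H₁ H₂ : Matrix (Fin 3) (Fin 3) ℂ)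
    (h1 : H₁.PosDef) (h2 : H₂.PosDef)
    (e1 : 6 * H₁.det.re > H₁.adjugate.trace.re)
    (e2 : 6 * H₂.det.re > H₂.adjugate.trace.re)
    (C : ℝ) (hC : C = 1 - H₁.adjugate.trace.re / (6 * H₁.det.re)) :
    C ∈ Set.Ioo (0 : ℝ) 1 ∧
    ∀ t ∈ Set.Icc (0 : ℝ) 1,
      ((6 : ℂ) • ((t : ℂ) • H₁ + ((1 - t : ℝ) : ℂ) • H₂)
        - (((1 + C * t : ℝ)) : ℂ) • (1 : Matrix (Fin 3) (Fin 3) ℂ)).PosDef := by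
  obtain ⟨hT1, hb1⟩ := aux_bounds h1
  obtain ⟨hT2, hb2⟩ := aux_bounds h2
  have hd1 : 0 < H₁.det.re := by nlinarith
  have hd2 : 0 < H₂.det.re := by nlinarith
  have hC0 : 0 < C := by
    rw [hC]
    have : H₁.adjugate.trace.re / (6 * H₁.det.re) < 1 := by
      rw [div_lt_one (by linarith)]
      linarith
    linarith
  have hC1 : C < 1 := by
    rw [hC]
    have : 0 < H₁.adjugate.trace.re / (6 * H₁.det.re) := by positivity
    linarith
  refine ⟨⟨hC0, hC1⟩, ?_⟩
  intro t ht
  -- key matrix decomposition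
  have hT1eq : H₁.adjugate.trace.re = 6 * (1 - C) * H₁.det.re := by
    rw [hC]
    field_simp
    ring
  have hμ1 : ∀ i, (1 + C : ℝ) < 6 * h1.1.eigenvalues i := by
    intro i
    have h := hb1 i
    have hμ := h1.eigenvalues_pos i
    rw [hT1eq] at h
    nlinarith
  have hμ2 : ∀ i, (1 : ℝ) < 6 * h2.1.eigenvalues i := by
    intro i
    have h := hb2 i
    have hμ := h2.eigenvalues_pos i
    nlinarith
  have P1 : ((6 : ℂ) • H₁ - (((1 + C : ℝ)) : ℂ) • 1).PosDef := by
    exact aux_smul_sub_smul_one_posDef h1.1 hμ1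
  have P2 : ((6 : ℂ) • H₂ - (((1 : ℝ)) : ℂ) • 1).PosDef := by
    have := aux_smul_sub_smul_one_posDef h2.1 hμ2
    simpa using this
  have key : (6 : ℂ) • ((t : ℂ) • H₁ + ((1 - t : ℝ) : ℂ) • H₂)
        - (((1 + C * t : ℝ)) : ℂ) • (1 : Matrix (Fin 3) (Fin 3) ℂ)
      = (t : ℂ) • ((6 : ℂ) • H₁ - (((1 + C : ℝ)) : ℂ) • 1)
        + ((1 - t : ℝ) : ℂ) • ((6 : ℂ) • H₂ - (((1 : ℝ)) : ℂ) • 1) := by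
    push_cast
    module
  rw [key]
  rcases lt_or_eq_of_le ht.2 with hlt | heq
  · exact Matrix.PosDef.posSemidef_add (aux_smul_posSemidef P1 ht.1)
      (aux_smul_posDef P2 (by linarith))
  · exact Matrix.PosDef.add_posSemidef (aux_smul_posDef P1 (by rw [heq]; norm_num))
      (aux_smul_posSemidef P2 (by linarith))
end

section
/- For every ε̃ ∈ (0,1) and all real numbers 0 < m ≤ M, there exist ε > 0 and K > 0 such that the following holds: whenever λ₁ ≥ λ₂ ≥ λ₃ > 0 are real numbers, f ∈ [m, M], and a₁, a₂, a₃ ∈ (0, 1−ε̃] satisfy λ₁·λ₂·λ₃ = f + a₁λ₁ + a₂λ₂ + a₃λ₃ and λ₁ + λ₂ + λ₃ ≥ K, then 1/λ₁ + 1/λ₂ + 1/λ₃ ≥ 2 + ε. -/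
/-- Helper: if `x*y ≤ 1 - ε` with `x,y > 0` and `ε ∈ (0, 1/2]`, then `1/x + 1/y ≥ 2 + ε`. -/
lemma recip_sum_aux (x y ε : ℝ) (hx : 0 < x) (hy : 0 < y) (hε : 0 < ε) (_hε2 : ε ≤ 1/2)
    (h : x * y ≤ 1 - ε) : 2 + ε ≤ 1/x + 1/y := by
  have hxy : 0 < x * y := mul_pos hx hy
  have h4 : (x + y)^2 ≥ 4 * (x * y) := by nlinarith [sq_nonneg (x - y)]
  have h5 : (2 + ε)^2 * (x * y)^2 ≤ (2 + ε)^2 * (1 - ε) * (x * y) := by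
    nlinarith [mul_nonneg (mul_nonneg (sq_nonneg (2 + ε)) hxy.le)
      (show (0:ℝ) ≤ 1 - ε - x * y by linarith)]
  have h6 : (2 + ε)^2 * (1 - ε) * (x * y) ≤ 4 * (x * y) := by
    nlinarith [mul_nonneg hxy.le (show (0:ℝ) ≤ 3 * ε^2 + ε^3 by positivity)]
  have hs : 0 < x + y := by linarith
  have hcp : 0 < (2 + ε) * (x * y) := by positivity
  have key : x + y ≥ (2 + ε) * (x * y) := by nlinarith
  have heqd : 1/x + 1/y = (x + y) / (x * y) := by field_simp; ring
  rw [heqd, le_div_iff₀ hxy]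
  linarith

/-- Quantitative reciprocal-eigenvalue lemma: for `ε̃ ∈ (0,1)` and `0 < m ≤ M` there are
`ε > 0` and `K > 0` such that whenever `λ₁ ≥ λ₂ ≥ λ₃ > 0`, `f ∈ [m,M]`,
`a₁,a₂,a₃ ∈ (0, 1−ε̃]`, `λ₁λ₂λ₃ = f + a₁λ₁ + a₂λ₂ + a₃λ₃` and `λ₁+λ₂+λ₃ ≥ K`, we have
`1/λ₁ + 1/λ₂ + 1/λ₃ ≥ 2 + ε`. -/
theorem stmt_8 (εt : ℝ) (hεt : εt ∈ Set.Ioo (0 : ℝ) 1)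
    (m M : ℝ) (hm : 0 < m) (hmM : m ≤ M) :
    ∃ ε > (0 : ℝ), ∃ K > (0 : ℝ),
      ∀ l1 l2 l3 f a1 a2 a3 : ℝ,
        l1 ≥ l2 → l2 ≥ l3 → l3 > 0 →
        f ∈ Set.Icc m M →
        a1 ∈ Set.Ioc (0 : ℝ) (1 - εt) → a2 ∈ Set.Ioc (0 : ℝ) (1 - εt) →
        a3 ∈ Set.Ioc (0 : ℝ) (1 - εt) →
        l1 * l2 * l3 = f + a1 * l1 + a2 * l2 + a3 * l3 →
        l1 + l2 + l3 ≥ K →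
        1 / l1 + 1 / l2 + 1 / l3 ≥ 2 + ε := by
  obtain ⟨ht0, ht1⟩ := hεt
  have hM : 0 < M := lt_of_lt_of_le hm hmM
  set T : ℝ := 3 * (M + 3) with hT
  have hTpos : 0 < T := by positivity
  have hdivpos : 0 < 2 * (M + 2 * T) / εt := by positivity
  refine ⟨εt/2, by linarith, 2 * T + 2 * (M + 2 * T) / εt + 3, by linarith, ?_⟩
  intro l1 l2 l3 f a1 a2 a3 h12 h23 h3 hf ha1 ha2 ha3 heq hK
  obtain ⟨hfm, hfM⟩ := hf
  obtain ⟨ha1p, ha1u⟩ := ha1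
  obtain ⟨ha2p, ha2u⟩ := ha2
  obtain ⟨ha3p, ha3u⟩ := ha3
  have h2 : (0:ℝ) < l2 := lt_of_lt_of_le h3 h23
  have h1 : (0:ℝ) < l1 := lt_of_lt_of_le h2 h12
  have hl1one : (1:ℝ) ≤ l1 := by linarith
  have e1 : a1 * l1 ≤ (1 - εt) * l1 := mul_le_mul_of_nonneg_right ha1u h1.le
  have e2 : a2 * l2 ≤ l2 := mul_le_of_le_one_left h2.le (by linarith)
  have e3 : a3 * l3 ≤ l3 := mul_le_of_le_one_left h3.le (by linarith)
  -- general bound: l2 * l3 ≤ M + 3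
  have hprod : l2 * l3 ≤ M + 3 := by
    have h0 : l1 * (l2 * l3) ≤ (M + 3) * l1 := by nlinarith
    nlinarith
  rcases le_or_gt T l2 with hcase | hcase
  · -- big l2 case: l3 ≤ 1/3
    have hl3 : l3 ≤ 1/3 := by nlinarith
    have h3' : (3:ℝ) ≤ 1 / l3 := by
      rw [le_div_iff₀ h3]; linarith
    have hp1 : (0:ℝ) < 1 / l1 := by positivity
    have hp2 : (0:ℝ) < 1 / l2 := by positivity
    linarith
  · -- small l2 case
    have hl3T : l3 < T := lt_of_le_of_lt h23 hcase
    have hl1big : l1 ≥ 2 * (M + 2 * T) / εt + 3 := by linarith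
    have hcancel : 2 * (M + 2 * T) / εt * εt = 2 * (M + 2 * T) :=
      div_mul_cancel₀ _ (ne_of_gt ht0)
    have hl1e : l1 * εt ≥ 2 * (M + 2 * T) := by nlinarith
    have hb : l1 * (l2 * l3) ≤ (M + 2 * T) + (1 - εt) * l1 := by
      linarith [heq, e1, e2, e3, hfM]
    have hsmall : l2 * l3 ≤ 1 - εt/2 := by
      have h' : (l2 * l3) * l1 ≤ (1 - εt/2) * l1 := by linarith [hb, hl1e]
      exact le_of_mul_le_mul_right h' h1
    have hmain := recip_sum_aux l2 l3 (εt/2) h2 h3 (by linarith) (by linarith) hsmall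
    have hp1 : (0:ℝ) < 1 / l1 := by positivity
    linarith
end
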